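/- Let Z be a finite set, Q a probability measure on Z with Q({z}) > 0 for all z, and A : Z → ℝ a conformity score. Define, for τ ∈ [0,1], p_τ(z) := Q({z' : A(z') < A(z)}) + τ·Q({z' : A(z') = A(z)}). If Z ∼ Q and τ ∼ Uniform[0,1] independently, then p_τ(Z) is uniformly distributed on [0,1]. -/

import Mathlib

open MeasureTheory

/-- Telescoping sum over a finite set of real "values". -/
private lemma stmt8_tele (M H : ℝ → ℝ) (s : Finset ℝ) :
    ∑ a ∈ s, (M (∑ b ∈ s.filter (fun b => b ≤ a), H b)
        - M (∑ b ∈ s.filter (fun b => b < a), H b))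
      = M (∑ b ∈ s, H b) - M 0 := by
  classical
  induction s using Finset.induction_on_max with
  | empty => simp
  | insert a s ha ih =>
    have hna : a ∉ s := fun hmem => lt_irrefl a (ha a hmem)
    have h1 : (insert a s).filter (fun b => b ≤ a) = insert a s := by
      apply Finset.filter_true_of_mem
      intro b hb
      rcases Finset.mem_insert.1 hb with rfl | hb
      · exact le_refl _
      · exact (ha b hb).le
    have h2 : (insert a s).filter (fun b => b < a) = s := by
      rw [Finset.filter_insert, if_neg (lt_irrefl a)]
      exact Finset.filter_true_of_mem fun b hb => ha b hb
    have h3 : ∀ c ∈ s, (insert a s).filter (fun b => b ≤ c)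
        = s.filter (fun b => b ≤ c) := by
      intro c hc
      rw [Finset.filter_insert, if_neg (not_le.2 (ha c hc))]
    have h4 : ∀ c ∈ s, (insert a s).filter (fun b => b < c)
        = s.filter (fun b => b < c) := by
      intro c hc
      rw [Finset.filter_insert, if_neg (asymm (ha c hc))]
    rw [Finset.sum_insert hna, h1, h2]
    have hrest : ∑ c ∈ s, (M (∑ b ∈ (insert a s).filter (fun b => b ≤ c), H b)
          - M (∑ b ∈ (insert a s).filter (fun b => b < c), H b))
        = ∑ c ∈ s, (M (∑ b ∈ s.filter (fun b => b ≤ c), H b)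
          - M (∑ b ∈ s.filter (fun b => b < c), H b)) :=
      Finset.sum_congr rfl fun c hc => by rw [h3 c hc, h4 c hc]
    rw [hrest, ih, Finset.sum_insert hna]
    ring

/-- The clamped-uniform identity. -/
private lemma stmt8_clamp {t g h : ℝ} (hg : 0 ≤ g) (hh : 0 < h) :
    h * max 0 (min 1 ((t - g) / h)) = max 0 (min t (g + h)) - max 0 (min t g) := by
  have h1 : h * max 0 (min 1 ((t - g) / h)) = max 0 (min h (t - g)) := by
    rw [mul_max_of_nonneg _ _ hh.le, mul_zero, mul_min_of_nonneg _ _ hh.le, mul_one,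
      mul_div_cancel₀ _ hh.ne']
  rw [h1]
  simp only [max_def, min_def]
  split_ifs <;> linarith

private lemma stmt8_ofReal_max (x : ℝ) :
    ENNReal.ofReal x = ENNReal.ofReal (max 0 x) := by
  rcases le_total 0 x with hx | hx
  · rw [max_eq_right hx]
  · rw [max_eq_left hx, ENNReal.ofReal_of_nonpos hx, ENNReal.ofReal_zero]

/-- Measure of a set described by a predicate, as a finite sum. -/
private lemma stmt8_msum {Z : Type*} [Fintype Z] [MeasurableSpace Z]
    [MeasurableSingletonClass Z] (μ : Measure Z) [IsFiniteMeasure μ]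
    (p : Z → Prop) [DecidablePred p] :
    (μ {z | p z}).toReal = ∑ z ∈ Finset.univ.filter p, (μ {z}).toReal := by
  classical
  have hset : {z | p z} = ⋃ z ∈ Finset.univ.filter p, ({z} : Set Z) := by
    ext z; simp
  have hd : Set.PairwiseDisjoint (↑(Finset.univ.filter p)) (fun z : Z => ({z} : Set Z)) := by
    intro x _ y _ hxy
    simp [Set.disjoint_singleton, hxy]
  rw [hset, measure_biUnion_finset hd fun z _ => measurableSet_singleton z,
    ENNReal.toReal_sum fun z _ => measure_ne_top μ _]

private lemma stmt8_key {Z : Type*} [Fintype Z] [MeasurableSpace Z]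
    [MeasurableSingletonClass Z]
    (μ : Measure Z) [IsProbabilityMeasure μ]
    (hpos : ∀ z : Z, 0 < μ {z}) (A : Z → ℝ) (t : ℝ) :
    ∑ z : Z, max 0 (min 1 ((t - (μ {z' | A z' < A z}).toReal)
        / (μ {z' | A z' = A z}).toReal)) * (μ {z}).toReal
      = max 0 (min 1 t) := by
  classical
  set W : Z → ℝ := fun z => (μ {z}).toReal with hW
  set Hr : ℝ → ℝ := fun a => (μ {z' | A z' = a}).toReal with hHr
  set Gr : ℝ → ℝ := fun a => (μ {z' | A z' < a}).toReal with hGr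
  set M : ℝ → ℝ := fun x => max 0 (min t x) with hM
  set ψ : ℝ → ℝ := fun a => max 0 (min 1 ((t - Gr a) / Hr a)) with hψ
  set s : Finset ℝ := Finset.image A Finset.univ with hs
  have hAs : ∀ z : Z, A z ∈ s := fun z => Finset.mem_image_of_mem A (Finset.mem_univ z)
  have hfib : ∀ a : ℝ, Hr a = ∑ z ∈ Finset.univ.filter (fun z => A z = a), W z := by
    intro a; exact stmt8_msum μ (fun z => A z = a)
  have hHpos : ∀ a ∈ s, 0 < Hr a := by
    intro a hmem
    rcases Finset.mem_image.1 hmem with ⟨z, _, rfl⟩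
    refine ENNReal.toReal_pos ?_ (measure_ne_top μ _)
    exact ((hpos z).trans_le (measure_mono (by simp))).ne'
  have hGnonneg : ∀ a : ℝ, 0 ≤ Gr a := fun a => ENNReal.toReal_nonneg
  -- grouping
  have hgroup : ∑ z : Z, ψ (A z) * W z = ∑ a ∈ s, ψ a * Hr a := by
    have h1 : ∑ a ∈ s, ψ a * Hr a
        = ∑ a ∈ s, ∑ z ∈ Finset.univ.filter (fun z => A z = a), ψ (A z) * W z := by
      refine Finset.sum_congr rfl fun a _ => ?_
      rw [hfib a, Finset.mul_sum]
      refine Finset.sum_congr rfl fun z hz => ?_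
      rw [(Finset.mem_filter.1 hz).2]
    rw [h1, Finset.sum_fiberwise_eq_sum_filter,
      Finset.filter_true_of_mem fun z _ => hAs z]
  -- partial-sum descriptions
  have hGsum : ∀ a : ℝ, Gr a = ∑ b ∈ s.filter (fun b => b < a), Hr b := by
    intro a
    have h1 : Gr a = ∑ z ∈ Finset.univ.filter (fun z => A z < a), W z :=
      stmt8_msum μ (fun z => A z < a)
    have h2 : ∑ b ∈ s.filter (fun b => b < a), Hr b
        = ∑ b ∈ s.filter (fun b => b < a),
            ∑ z ∈ Finset.univ.filter (fun z => A z = b), W z :=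
      Finset.sum_congr rfl fun b _ => hfib b
    rw [h1, h2, Finset.sum_fiberwise_eq_sum_filter]
    congr 1
    ext z
    simp [Finset.mem_filter, hAs z]
  have hCsum : ∀ a : ℝ, Gr a + Hr a = ∑ b ∈ s.filter (fun b => b ≤ a), Hr b := by
    intro a
    have h2 : ∑ b ∈ s.filter (fun b => b ≤ a), Hr b
        = ∑ z ∈ Finset.univ.filter (fun z => A z ≤ a), W z := by
      have h2a : ∑ b ∈ s.filter (fun b => b ≤ a), Hr b
          = ∑ b ∈ s.filter (fun b => b ≤ a),
              ∑ z ∈ Finset.univ.filter (fun z => A z = b), W z :=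
        Finset.sum_congr rfl fun b _ => hfib b
      rw [h2a, Finset.sum_fiberwise_eq_sum_filter]
      congr 1
      ext z
      simp [Finset.mem_filter, hAs z]
    have hunion : Finset.univ.filter (fun z : Z => A z ≤ a)
        = Finset.univ.filter (fun z => A z < a) ∪ Finset.univ.filter (fun z => A z = a) := by
      ext z
      simp only [Finset.mem_filter, Finset.mem_union, Finset.mem_univ, true_and]
      exact le_iff_lt_or_eq
    have hdisj : Disjoint (Finset.univ.filter (fun z : Z => A z < a))
        (Finset.univ.filter (fun z : Z => A z = a)) := by
      rw [Finset.disjoint_left]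
      intro z hz1 hz2
      have e1 : A z < a := (Finset.mem_filter.1 hz1).2
      have e2 : A z = a := (Finset.mem_filter.1 hz2).2
      rw [e2] at e1
      exact lt_irrefl a e1
    rw [h2, hunion, Finset.sum_union hdisj,
      ← stmt8_msum μ (fun z => A z < a), ← stmt8_msum μ (fun z => A z = a)]
  -- per-value identity
  have hterm : ∀ a ∈ s, ψ a * Hr a
      = M (∑ b ∈ s.filter (fun b => b ≤ a), Hr b)
        - M (∑ b ∈ s.filter (fun b => b < a), Hr b) := by
    intro a hmem
    rw [← hCsum a, ← hGsum a, mul_comm]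
    simp only [hψ, hM]
    exact stmt8_clamp (hGnonneg a) (hHpos a hmem)
  -- total mass
  have htot : ∑ b ∈ s, Hr b = 1 := by
    have h1 : ∑ b ∈ s, Hr b
        = ∑ b ∈ s, ∑ z ∈ Finset.univ.filter (fun z => A z = b), W z :=
      Finset.sum_congr rfl fun b _ => hfib b
    rw [h1, Finset.sum_fiberwise_eq_sum_filter,
      Finset.filter_true_of_mem fun z _ => hAs z]
    have h2 : (μ {z : Z | True}).toReal = ∑ z ∈ Finset.univ.filter (fun _ : Z => True), W z :=
      stmt8_msum μ (fun _ => True)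
    rw [Finset.filter_true_of_mem fun _ _ => trivial] at h2
    rw [← h2]
    simp [Set.setOf_true]
  calc ∑ z : Z, max 0 (min 1 ((t - (μ {z' | A z' < A z}).toReal)
        / (μ {z' | A z' = A z}).toReal)) * (μ {z}).toReal
      = ∑ z : Z, ψ (A z) * W z := rfl
    _ = ∑ a ∈ s, ψ a * Hr a := hgroup
    _ = ∑ a ∈ s, (M (∑ b ∈ s.filter (fun b => b ≤ a), Hr b)
          - M (∑ b ∈ s.filter (fun b => b < a), Hr b)) :=
        Finset.sum_congr rfl hterm
    _ = M (∑ b ∈ s, Hr b) - M 0 := stmt8_tele M Hr s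
    _ = max 0 (min 1 t) := by
        rw [htot]
        simp only [hM]
        rw [max_eq_left (min_le_right t 0), sub_zero, min_comm]

theorem stmt_8 {Z : Type*} [Fintype Z] [MeasurableSpace Z]
    [MeasurableSingletonClass Z]
    (μ : Measure Z) [IsProbabilityMeasure μ]
    (hpos : ∀ z : Z, 0 < μ {z}) (A : Z → ℝ) :
    Measure.map
      (fun zt : Z × ℝ =>
        (μ {z' | A z' < A zt.1}).toReal + zt.2 * (μ {z' | A z' = A zt.1}).toReal)
      (μ.prod (volume.restrict (Set.Icc (0:ℝ) 1)))
      = volume.restrict (Set.Icc (0:ℝ) 1) := by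
  classical
  haveI hν : IsProbabilityMeasure (volume.restrict (Set.Icc (0:ℝ) 1)) := by
    constructor
    rw [Measure.restrict_apply_univ, Real.volume_Icc]
    norm_num
  set f : Z × ℝ → ℝ := fun zt =>
    (μ {z' | A z' < A zt.1}).toReal + zt.2 * (μ {z' | A z' = A zt.1}).toReal with hf
  have hmeas : Measurable f := by
    apply Measurable.add
    · exact (measurable_of_countable
        (fun z : Z => (μ {z' | A z' < A z}).toReal)).comp measurable_fst
    · exact measurable_snd.mul ((measurable_of_countable
        (fun z : Z => (μ {z' | A z' = A z}).toReal)).comp measurable_fst)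
  haveI : IsProbabilityMeasure
      (Measure.map f (μ.prod (volume.restrict (Set.Icc (0:ℝ) 1)))) :=
    Measure.isProbabilityMeasure_map hmeas.aemeasurable
  refine MeasureTheory.Measure.ext_of_Iic _ _ fun t => ?_
  have hIic : ∀ m : ℝ, (volume.restrict (Set.Icc (0:ℝ) 1)) (Set.Iic m)
      = ENNReal.ofReal (min 1 m) := by
    intro m
    rw [Measure.restrict_apply measurableSet_Iic]
    have hset : Set.Iic m ∩ Set.Icc (0:ℝ) 1 = Set.Icc 0 (min 1 m) := by
      ext x
      simp only [Set.mem_inter_iff, Set.mem_Iic, Set.mem_Icc, le_min_iff]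
      constructor
      · rintro ⟨h1, h2, h3⟩; exact ⟨h2, h3, h1⟩
      · rintro ⟨h1, h2, h3⟩; exact ⟨h3, h1, h2⟩
    rw [hset, Real.volume_Icc, sub_zero]
  have hHpos : ∀ z : Z, 0 < (μ {z' | A z' = A z}).toReal := by
    intro z
    refine ENNReal.toReal_pos ?_ (measure_ne_top μ _)
    exact ((hpos z).trans_le (measure_mono (by simp))).ne'
  have hfiber : ∀ z : Z,
      (volume.restrict (Set.Icc (0:ℝ) 1)) (Prod.mk z ⁻¹' (f ⁻¹' Set.Iic t))
        = ENNReal.ofReal (min 1 ((t - (μ {z' | A z' < A z}).toReal)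
            / (μ {z' | A z' = A z}).toReal)) := by
    intro z
    have hset : Prod.mk z ⁻¹' (f ⁻¹' Set.Iic t)
        = Set.Iic ((t - (μ {z' | A z' < A z}).toReal)
            / (μ {z' | A z' = A z}).toReal) := by
      ext τ
      simp only [Set.mem_preimage, Set.mem_Iic, hf]
      rw [le_div_iff₀ (hHpos z)]
      constructor <;> intro hle <;> linarith
    rw [hset, hIic]
  rw [Measure.map_apply hmeas measurableSet_Iic,
    Measure.prod_apply (hmeas measurableSet_Iic), lintegral_congr hfiber,
    lintegral_fintype, hIic t]
  have hz : ∀ z : Z,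
      ENNReal.ofReal (min 1 ((t - (μ {z' | A z' < A z}).toReal)
          / (μ {z' | A z' = A z}).toReal)) * μ {z}
        = ENNReal.ofReal (max 0 (min 1 ((t - (μ {z' | A z' < A z}).toReal)
            / (μ {z' | A z' = A z}).toReal)) * (μ {z}).toReal) := by
    intro z
    rw [ENNReal.ofReal_mul (le_max_left 0 _),
      ENNReal.ofReal_toReal (measure_ne_top μ {z}), ← stmt8_ofReal_max]
  rw [Finset.sum_congr rfl fun z _ => hz z,
    ← ENNReal.ofReal_sum_of_nonneg
      fun z _ => mul_nonneg (le_max_left 0 _) ENNReal.toReal_nonneg,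
    stmt8_key μ hpos A t, ← stmt8_ofReal_max]
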